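/- For 0 < q < 1, 0 < a < 1/q and b < 1/q with b ≠ 0, the q-binomial identity ∑_{n=0}^∞ ((bq;q)_n / (q;q)_n) (aq)^n = (abq²;q)_∞ / (aq;q)_∞ holds. -/

import Mathlib

/-- The finite q-Pochhammer symbol `(x;q)_n = ∏_{k=0}^{n-1} (1 - x q^k)`. -/
noncomputable def qp (q x : ℝ) (n : ℕ) : ℝ := ∏ k ∈ Finset.range n, (1 - x * q ^ k)

/-- The infinite q-Pochhammer symbol `(x;q)_∞ = ∏_{k=0}^{∞} (1 - x q^k)`. -/
noncomputable def qpInf (q x : ℝ) : ℝ := ∏' k : ℕ, (1 - x * q ^ k)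

open Real Filter

lemma aux_exp_le {s c : ℝ} (hs : 0 ≤ s) (hsc : s ≤ c) (hc : c < 1) :
    Real.exp (-(s / (1 - c))) ≤ 1 - s := by
  have hc0 : (0:ℝ) < 1 - c := by linarith
  have hs1 : (0:ℝ) < 1 - s := by linarith
  have h1 : 1 + s / (1 - c) ≤ Real.exp (s / (1 - c)) := by
    have := Real.add_one_le_exp (s / (1 - c)); linarith
  have key : 1 ≤ (1 - s) * (1 + s / (1 - c)) := by
    have h2 : (1 - s) * (1 + s / (1 - c)) - 1 = s * (c - s) / (1 - c) := by
      field_simp; ring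
    have h3 : 0 ≤ s * (c - s) / (1 - c) :=
      div_nonneg (mul_nonneg hs (by linarith)) hc0.le
    linarith
  rw [Real.exp_neg, inv_eq_one_div, div_le_iff₀ (Real.exp_pos _)]
  calc (1:ℝ) ≤ (1 - s) * (1 + s / (1 - c)) := key
    _ ≤ (1 - s) * Real.exp (s / (1 - c)) := by
        exact mul_le_mul_of_nonneg_left h1 hs1.le

lemma abs_log_one_sub_le {t c : ℝ} (hc0 : 0 ≤ c) (hc : c < 1) (htc : t ≤ c) :
    |Real.log (1 - t)| ≤ |t| / (1 - c) := by
  have hc1 : (0:ℝ) < 1 - c := by linarith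
  have ht1 : (0:ℝ) < 1 - t := by linarith
  rcases le_or_gt 0 t with ht | ht
  · have h1 : Real.log (1 - t) ≤ 0 := Real.log_nonpos (by linarith) (by linarith)
    have h2 : -(t / (1 - c)) ≤ Real.log (1 - t) := by
      rw [Real.le_log_iff_exp_le ht1]
      exact aux_exp_le ht htc hc
    rw [abs_of_nonpos h1, abs_of_nonneg ht]
    linarith
  · have h1 : 0 ≤ Real.log (1 - t) := Real.log_nonneg (by linarith)
    have h2 : Real.log (1 - t) ≤ -t := by
      have := Real.log_le_sub_one_of_pos ht1; linarith
    rw [abs_of_nonneg h1, abs_of_neg ht]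
    rw [le_div_iff₀ hc1]
    nlinarith

lemma qpInf_hasProd {q x : ℝ} (hq0 : 0 < q) (hq1 : q < 1) (hx : x < 1) :
    HasProd (fun k : ℕ => 1 - x * q ^ k) (qpInf q x) ∧ 0 < qpInf q x := by
  set c := max x 0 with hcdef
  have hc0 : (0:ℝ) ≤ c := le_max_right _ _
  have hc1 : c < 1 := max_lt hx one_pos
  have hle : ∀ k : ℕ, x * q ^ k ≤ c := by
    intro k
    rcases le_or_gt x 0 with h | h
    · exact le_trans (mul_nonpos_of_nonpos_of_nonneg h (pow_nonneg hq0.le k)) hc0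
    · calc x * q ^ k ≤ x * 1 := by
            exact mul_le_mul_of_nonneg_left (pow_le_one₀ hq0.le hq1.le) h.le
        _ = x := mul_one x
        _ ≤ c := le_max_left _ _
  have hpos : ∀ k : ℕ, 0 < 1 - x * q ^ k := fun k => by have := hle k; linarith
  have hsum : Summable (fun k : ℕ => Real.log (1 - x * q ^ k)) := by
    have hb : Summable (fun k : ℕ => |x| / (1 - c) * q ^ k) :=
      (summable_geometric_of_lt_one hq0.le hq1).mul_left _
    have habs : Summable (fun k : ℕ => |Real.log (1 - x * q ^ k)|) := by
      refine Summable.of_nonneg_of_le (fun k => abs_nonneg _) (fun k => ?_) hb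
      have := abs_log_one_sub_le hc0 hc1 (hle k)
      calc |Real.log (1 - x * q ^ k)| ≤ |x * q ^ k| / (1 - c) := this
        _ = |x| / (1 - c) * q ^ k := by
            rw [abs_mul, abs_pow, abs_of_pos hq0]; ring
    exact habs.of_abs
  have hprod : HasProd (fun k : ℕ => 1 - x * q ^ k)
      (Real.exp (∑' k : ℕ, Real.log (1 - x * q ^ k))) := by
    have e : (fun k : ℕ => 1 - x * q ^ k)
        = (Real.exp ∘ fun k : ℕ => Real.log (1 - x * q ^ k)) := by
      funext k; simp [Real.exp_log (hpos k)]
    rw [e]; exact hsum.hasSum.rexp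
  constructor
  · show HasProd _ (∏' k : ℕ, (1 - x * q ^ k))
    exact hprod.multipliable.hasProd
  · show (0:ℝ) < ∏' k : ℕ, (1 - x * q ^ k)
    rw [hprod.tprod_eq]; exact Real.exp_pos _

/-- q-binomial theorem, eq. (4.9):
`∑_{n≥0} ((bq;q)_n/(q;q)_n) (aq)^n = (abq²;q)_∞/(aq;q)_∞`. -/
theorem q_binomial (q a b : ℝ) (hq0 : 0 < q) (hq1 : q < 1)
    (ha0 : 0 < a) (ha1 : a < 1 / q) (hb : b < 1 / q) (hb0 : b ≠ 0) :
    HasSum (fun n : ℕ => qp q (b * q) n / qp q q n * (a * q) ^ n)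
      (qpInf q (a * b * q ^ 2) / qpInf q (a * q)) := by
  have hq1' : (0:ℝ) < 1 - q := by linarith
  set r := a * q with hr
  have hr0 : 0 < r := mul_pos ha0 hq0
  have hr1 : r < 1 := by
    rw [hr, ← lt_div_iff₀ hq0]; exact ha1
  have hbq1 : b * q < 1 := by
    rw [← lt_div_iff₀ hq0]; exact hb
  set c : ℕ → ℝ := fun n => qp q (b * q) n / qp q q n with hcdef
  -- positivity of (q;q)_n
  have hqfac : ∀ k : ℕ, q * q ^ k ≤ q := by
    intro k
    calc q * q ^ k ≤ q * 1 := mul_le_mul_of_nonneg_left (pow_le_one₀ hq0.le hq1.le) hq0.le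
      _ = q := mul_one q
  have hqp_pos : ∀ n, 0 < qp q q n := by
    intro n
    apply Finset.prod_pos
    intro k _
    have := hqfac k; linarith
  have hc0 : c 0 = 1 := by simp [hcdef, qp]
  -- recurrence
  have hrec : ∀ n : ℕ, c (n + 1) * (1 - q ^ (n + 1)) = c n * (1 - b * q ^ (n + 1)) := by
    intro n
    have hqp : qp q q (n + 1) = qp q q n * (1 - q * q ^ n) := Finset.prod_range_succ _ _
    have hqpb : qp q (b * q) (n + 1) = qp q (b * q) n * (1 - b * q * q ^ n) :=
      Finset.prod_range_succ _ _
    have h1 : qp q q n ≠ 0 := (hqp_pos n).ne'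
    have h2 : (1 - q * q ^ n) ≠ 0 := by have := hqfac n; intro h; nlinarith
    simp only [hcdef]
    rw [hqp, hqpb, pow_succ]
    field_simp
  -- uniform bound on c
  set A := Real.exp (|b| * q / (1 - q) + q / ((1 - q) * (1 - q))) with hA
  have hA0 : 0 < A := Real.exp_pos _
  have hgeom : ∀ n : ℕ, ∑ k ∈ Finset.range n, q ^ k ≤ 1 / (1 - q) := by
    intro n
    have h := Summable.sum_le_tsum (Finset.range n) (fun i _ => (pow_nonneg hq0.le i))
      (summable_geometric_of_lt_one hq0.le hq1)
    rwa [tsum_geometric_of_lt_one hq0.le hq1, inv_eq_one_div] at h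
  have hupper : ∀ n : ℕ, |qp q (b * q) n| ≤ Real.exp (|b| * q / (1 - q)) := by
    intro n
    rw [qp, Finset.abs_prod]
    calc ∏ k ∈ Finset.range n, |1 - b * q * q ^ k|
        ≤ ∏ k ∈ Finset.range n, Real.exp (|b| * q * q ^ k) := by
          apply Finset.prod_le_prod (fun k _ => abs_nonneg _)
          intro k _
          have h1 : |1 - b * q * q ^ k| ≤ 1 + |b * q * q ^ k| := by
            calc |1 - b * q * q ^ k| ≤ |(1:ℝ)| + |b * q * q ^ k| := abs_sub _ _
              _ = 1 + |b * q * q ^ k| := by rw [abs_one]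
          have h2 : 1 + |b * q * q ^ k| ≤ Real.exp (|b * q * q ^ k|) := by
            have := Real.add_one_le_exp (|b * q * q ^ k|); linarith
          have h3 : |b * q * q ^ k| = |b| * q * q ^ k := by
            rw [abs_mul, abs_mul, abs_of_pos hq0, abs_pow, abs_of_pos hq0]
          rw [← h3]; exact h1.trans h2
      _ = Real.exp (∑ k ∈ Finset.range n, |b| * q * q ^ k) := (Real.exp_sum _ _).symm
      _ ≤ Real.exp (|b| * q / (1 - q)) := by
          apply Real.exp_le_exp.2
          rw [← Finset.mul_sum]
          calc |b| * q * ∑ k ∈ Finset.range n, q ^ k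
              ≤ |b| * q * (1 / (1 - q)) := by
                apply mul_le_mul_of_nonneg_left (hgeom n)
                positivity
            _ = |b| * q / (1 - q) := by ring
  have hlower : ∀ n : ℕ, Real.exp (-(q / ((1 - q) * (1 - q)))) ≤ qp q q n := by
    intro n
    rw [qp]
    calc Real.exp (-(q / ((1 - q) * (1 - q))))
        ≤ Real.exp (∑ k ∈ Finset.range n, -(q * q ^ k / (1 - q))) := by
          apply Real.exp_le_exp.2
          rw [Finset.sum_neg_distrib, neg_le_neg_iff]
          calc ∑ k ∈ Finset.range n, q * q ^ k / (1 - q)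
              = q / (1 - q) * ∑ k ∈ Finset.range n, q ^ k := by
                rw [Finset.mul_sum]; exact Finset.sum_congr rfl (fun k _ => by ring)
            _ ≤ q / (1 - q) * (1 / (1 - q)) := by
                apply mul_le_mul_of_nonneg_left (hgeom n) (by positivity)
            _ = q / ((1 - q) * (1 - q)) := by rw [div_mul_div_comm, mul_one]
      _ = ∏ k ∈ Finset.range n, Real.exp (-(q * q ^ k / (1 - q))) := Real.exp_sum _ _
      _ ≤ ∏ k ∈ Finset.range n, (1 - q * q ^ k) := by
          apply Finset.prod_le_prod (fun k _ => (Real.exp_pos _).le)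
          intro k _
          exact aux_exp_le (by positivity) (hqfac k) hq1
  have hCb : ∀ n : ℕ, |c n| ≤ A := by
    intro n
    have h1 := hupper n
    have h2 := hlower n
    have h3 : |c n| = |qp q (b * q) n| / qp q q n := by
      rw [hcdef]; rw [abs_div, abs_of_pos (hqp_pos n)]
    rw [h3, hA]
    calc |qp q (b * q) n| / qp q q n
        ≤ Real.exp (|b| * q / (1 - q)) / Real.exp (-(q / ((1 - q) * (1 - q)))) := by
          apply div_le_div₀ (Real.exp_pos _).le h1 (Real.exp_pos _) h2
      _ = Real.exp (|b| * q / (1 - q) + q / ((1 - q) * (1 - q))) := by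
          rw [← Real.exp_sub]; ring_nf
  -- summability
  have hsum : ∀ w : ℝ, |w| < 1 → Summable (fun n : ℕ => c n * w ^ n) := by
    intro w hw
    apply Summable.of_abs
    refine Summable.of_nonneg_of_le (fun n => abs_nonneg _) (fun n => ?_)
      ((summable_geometric_of_lt_one (abs_nonneg w) hw).mul_left A)
    rw [abs_mul, abs_pow]
    exact mul_le_mul_of_nonneg_right (hCb n) (pow_nonneg (abs_nonneg w) n)
  set f : ℝ → ℝ := fun w => ∑' n : ℕ, c n * w ^ n with hfdef
  -- tail hasSum
  have htail : ∀ w : ℝ, 0 ≤ w → w < 1 →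
      HasSum (fun n : ℕ => c (n + 1) * w ^ (n + 1)) (f w - 1) := by
    intro w hw0 hw1
    have hw : |w| < 1 := by rwa [abs_of_nonneg hw0]
    have s1 : HasSum (fun n : ℕ => c n * w ^ n) (f w) := (hsum w hw).hasSum
    have t0 : HasSum (fun n : ℕ => c n * w ^ n)
        ((f w - 1) + ∑ i ∈ Finset.range 1, c i * w ^ i) := by
      simpa [hc0] using s1
    exact (hasSum_nat_add_iff (f := fun n : ℕ => c n * w ^ n) 1).mpr t0
  -- functional equation
  have hfe : ∀ w : ℝ, 0 ≤ w → w < 1 → (1 - w) * f w = (1 - b * q * w) * f (q * w) := by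
    intro w hw0 hw1
    have hw : |w| < 1 := by rwa [abs_of_nonneg hw0]
    have hqw0 : 0 ≤ q * w := by positivity
    have hqw1 : q * w < 1 := by nlinarith
    have s1 : HasSum (fun n : ℕ => c n * w ^ n) (f w) := (hsum w hw).hasSum
    have s2 : HasSum (fun n : ℕ => c n * (q * w) ^ n) (f (q * w)) :=
      (hsum (q * w) (by rwa [abs_of_nonneg hqw0])).hasSum
    have t1 := htail w hw0 hw1
    have t2 := htail (q * w) hqw0 hqw1
    have h1 : HasSum (fun n : ℕ => c (n + 1) * w ^ (n + 1) - w * (c n * w ^ n))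
        ((f w - 1) - w * f w) := t1.sub (s1.mul_left w)
    have h2 : HasSum (fun n : ℕ => c (n + 1) * (q * w) ^ (n + 1) - b * q * w * (c n * (q * w) ^ n))
        ((f (q * w) - 1) - b * q * w * f (q * w)) := t2.sub (s2.mul_left (b * q * w))
    have e : (fun n : ℕ => c (n + 1) * (q * w) ^ (n + 1) - b * q * w * (c n * (q * w) ^ n))
        = (fun n : ℕ => c (n + 1) * w ^ (n + 1) - w * (c n * w ^ n)) := by
      funext n
      have h := hrec n
      have : (q * w) ^ (n + 1) = q ^ (n + 1) * w ^ (n + 1) := mul_pow _ _ _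
      have hqn : (q * w) ^ n = q ^ n * w ^ n := mul_pow _ _ _
      rw [this, hqn]
      linear_combination (-(w ^ (n + 1))) * h
    rw [e] at h2
    have := h1.unique h2
    linarith
  -- iteration
  have hiter : ∀ N : ℕ, (∏ j ∈ Finset.range N, (1 - r * q ^ j)) * f r
      = (∏ j ∈ Finset.range N, (1 - b * q * r * q ^ j)) * f (q ^ N * r) := by
    intro N
    induction N with
    | zero => simp
    | succ N ih =>
      rw [Finset.prod_range_succ, Finset.prod_range_succ]
      have hw0 : 0 ≤ q ^ N * r := by positivity
      have hqNle : q ^ N ≤ 1 := pow_le_one₀ hq0.le hq1.le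
      have hw1 : q ^ N * r < 1 := by nlinarith
      have hfeN := hfe (q ^ N * r) hw0 hw1
      have e1 : q * (q ^ N * r) = q ^ (N + 1) * r := by ring
      rw [e1] at hfeN
      have e2 : 1 - r * q ^ N = 1 - q ^ N * r := by ring
      have e3 : 1 - b * q * r * q ^ N = 1 - b * q * (q ^ N * r) := by ring
      linear_combination (1 - r * q ^ N) * ih
        + (∏ j ∈ Finset.range N, (1 - b * q * r * q ^ j)) * hfeN
  -- limits
  have hP1 := (qpInf_hasProd hq0 hq1 hr1).1.tendsto_prod_nat
  have hbqr1 : b * q * r < 1 := by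
    rcases le_or_gt (b * q) 0 with h | h
    · have : b * q * r ≤ 0 := mul_nonpos_of_nonpos_of_nonneg h hr0.le
      linarith
    · nlinarith
  have hP2 := (qpInf_hasProd hq0 hq1 hbqr1).1.tendsto_prod_nat
  have hftail : Tendsto (fun N : ℕ => f (q ^ N * r)) atTop (nhds 1) := by
    have key : ∀ N : ℕ, |f (q ^ N * r) - 1| ≤ A / (1 - r) * (q ^ N * r) := by
      intro N
      set w := q ^ N * r with hwdef
      have hw0 : 0 ≤ w := by positivity
      have hqNle : q ^ N ≤ 1 := pow_le_one₀ hq0.le hq1.le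
      have hwr : w ≤ r := by rw [hwdef]; nlinarith
      have hw1 : w < 1 := lt_of_le_of_lt hwr hr1
      have t1 := htail w hw0 hw1
      have g1 : HasSum (fun n : ℕ => A * w * w ^ n) (A * w * (1 - w)⁻¹) :=
        (hasSum_geometric_of_lt_one hw0 hw1).mul_left (A * w)
      have hb1 : f w - 1 ≤ A * w * (1 - w)⁻¹ := by
        apply hasSum_le (fun n => ?_) t1 g1
        calc c (n + 1) * w ^ (n + 1) ≤ |c (n + 1) * w ^ (n + 1)| := le_abs_self _
          _ = |c (n + 1)| * w ^ (n + 1) := by rw [abs_mul, abs_pow, abs_of_nonneg hw0]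
          _ ≤ A * w ^ (n + 1) := mul_le_mul_of_nonneg_right (hCb _) (pow_nonneg hw0 _)
          _ = A * w * w ^ n := by ring
      have hb2 : -(A * w * (1 - w)⁻¹) ≤ f w - 1 := by
        apply hasSum_le (fun n => ?_) (g1.neg) t1
        have : -|c (n + 1) * w ^ (n + 1)| ≤ c (n + 1) * w ^ (n + 1) := neg_abs_le _
        have h2 : |c (n + 1) * w ^ (n + 1)| ≤ A * w * w ^ n := by
          calc |c (n + 1) * w ^ (n + 1)| = |c (n + 1)| * w ^ (n + 1) := by
                rw [abs_mul, abs_pow, abs_of_nonneg hw0]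
            _ ≤ A * w ^ (n + 1) := mul_le_mul_of_nonneg_right (hCb _) (pow_nonneg hw0 _)
            _ = A * w * w ^ n := by ring
        linarith
      have habs : |f w - 1| ≤ A * w * (1 - w)⁻¹ := abs_le.2 ⟨hb2, hb1⟩
      have hinv : (1 - w)⁻¹ ≤ (1 - r)⁻¹ := by
        apply inv_anti₀ (by linarith) (by linarith)
      calc |f w - 1| ≤ A * w * (1 - w)⁻¹ := habs
        _ ≤ A * w * (1 - r)⁻¹ := by
            apply mul_le_mul_of_nonneg_left hinv (by positivity)
        _ = A / (1 - r) * w := by ring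
    have hz : Tendsto (fun N : ℕ => A / (1 - r) * (q ^ N * r)) atTop (nhds 0) := by
      have := (tendsto_pow_atTop_nhds_zero_of_lt_one hq0.le hq1).mul_const r
      have := this.const_mul (A / (1 - r))
      simpa using this
    have h0 : Tendsto (fun N : ℕ => f (q ^ N * r) - 1) atTop (nhds 0) := by
      apply squeeze_zero_norm ?_ hz
      intro N
      rw [Real.norm_eq_abs]
      exact key N
    have := h0.add_const 1
    simpa using this
  have hL : Tendsto (fun N : ℕ => (∏ j ∈ Finset.range N, (1 - r * q ^ j)) * f r) atTop
      (nhds (qpInf q r * f r)) := hP1.mul_const _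
  have hR : Tendsto (fun N : ℕ => (∏ j ∈ Finset.range N, (1 - b * q * r * q ^ j)) * f (q ^ N * r))
      atTop (nhds (qpInf q (b * q * r) * 1)) := hP2.mul hftail
  have heq : qpInf q r * f r = qpInf q (b * q * r) * 1 :=
    tendsto_nhds_unique (hL.congr hiter) hR
  have hpos := (qpInf_hasProd hq0 hq1 hr1).2
  have hfr : f r = qpInf q (b * q * r) / qpInf q r := by
    rw [eq_div_iff hpos.ne']
    linarith [heq]
  have hgoal : HasSum (fun n : ℕ => c n * r ^ n) (f r) :=
    (hsum r (by rwa [abs_of_nonneg hr0.le])).hasSum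
  rw [hfr] at hgoal
  have harg : a * b * q ^ 2 = b * q * r := by rw [hr]; ring
  rw [harg]
  simpa [hcdef] using hgoal
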